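/- Suppose α is irrational and f ∈ L²(T²) depends only on p (i.e., f ∈ H₂, the closed span of {e_{0,s}}) and satisfies Uf = λf with |λ| = 1 for the Koopman operator U of the triangle map. Then f is constant almost everywhere and λ = 1. -/

import Mathlib

open MeasureTheory Finset

/-- The step function `θ` on the circle: `1` on `[0,1/2)`, `-1` on `[1/2,1)`. -/
noncomputable def triTheta (q : AddCircle (1:ℝ)) : ℝ :=
  if ((AddCircle.equivIco 1 0 q : ℝ)) < 1/2 then 1 else -1

/-- The triangle map `φ(q,p) = (q+p+αθ(q)+β, p+αθ(q)+β)` on the torus. -/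
noncomputable def triMap (α β : ℝ) :
    AddCircle (1:ℝ) × AddCircle (1:ℝ) → AddCircle (1:ℝ) × AddCircle (1:ℝ) :=
  fun x => (x.1 + x.2 + ((α * triTheta x.1 + β : ℝ) : AddCircle (1:ℝ)),
            x.2 + ((α * triTheta x.1 + β : ℝ) : AddCircle (1:ℝ)))

/-- Integer multiples of an irrational point are dense in the circle. -/
lemma triAux_denseRange_zsmul {x : ℝ} (hx : Irrational x) :
    DenseRange (fun n : ℤ => n • (x : AddCircle (1:ℝ))) := by
  set S : AddSubgroup ℝ := AddSubgroup.closure {x, 1} with hS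
  rcases S.dense_or_cyclic with hd | ⟨a, ha⟩
  · have hsurj : Function.Surjective ((↑) : ℝ → AddCircle (1:ℝ)) :=
      QuotientAddGroup.mk_surjective
    have hcont : Continuous ((↑) : ℝ → AddCircle (1:ℝ)) := continuous_quotient_mk'
    have himg : Dense (((↑) : ℝ → AddCircle (1:ℝ)) '' (S : Set ℝ)) :=
      hsurj.denseRange.dense_image hcont hd
    have hsub : (((↑) : ℝ → AddCircle (1:ℝ)) '' (S : Set ℝ)) ⊆
        Set.range (fun n : ℤ => n • (x : AddCircle (1:ℝ))) := by
      rintro _ ⟨s, hs, rfl⟩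
      rw [hS, SetLike.mem_coe, AddSubgroup.mem_closure_pair] at hs
      obtain ⟨m, n, rfl⟩ := hs
      refine ⟨m, ?_⟩
      have h1 : ((1 : ℝ) : AddCircle (1:ℝ)) = 0 := by
        simpa using AddCircle.coe_period (p := (1:ℝ))
      simp [QuotientAddGroup.mk_add, QuotientAddGroup.mk_zsmul, h1]
    exact (himg.mono hsub)
  · exfalso
    have hxS : x ∈ S := AddSubgroup.subset_closure (by simp)
    have h1S : (1:ℝ) ∈ S := AddSubgroup.subset_closure (by simp)
    rw [ha, AddSubgroup.mem_closure_singleton] at hxS h1S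
    obtain ⟨m, hm⟩ := hxS
    obtain ⟨n, hn⟩ := h1S
    have hn0 : (n : ℝ) ≠ 0 := by
      rintro h
      rw [zsmul_eq_mul, h, zero_mul] at hn
      exact one_ne_zero hn.symm
    refine hx ⟨(m : ℚ) / n, ?_⟩
    have ha' : a = 1 / n := by
      field_simp at hn ⊢
      rw [zsmul_eq_mul] at hn
      linarith [hn, mul_comm a (n:ℝ)]
    rw [zsmul_eq_mul, ha'] at hm
    push_cast
    rw [← hm]
    field_simp

lemma triAux_image_ne_zero {s : Set ℝ} (hs : s ⊆ Set.Ioc 0 1) (hvs : volume s ≠ 0)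
    {S : Set (AddCircle (1:ℝ))} (hsub : ((↑) : ℝ → AddCircle (1:ℝ)) '' s ⊆ S) :
    (volume : Measure (AddCircle (1:ℝ))) S ≠ 0 := by
  intro h0
  have hmp := (AddCircle.measurePreserving_mk (1:ℝ) 0).quasiMeasurePreserving
  have h1 : (volume.restrict (Set.Ioc (0:ℝ) (0 + 1))) (((↑) : ℝ → AddCircle (1:ℝ)) ⁻¹' S) = 0 :=
    hmp.preimage_null h0
  have hsub2 : s ⊆ ((↑) : ℝ → AddCircle (1:ℝ)) ⁻¹' S := fun x hx =>
    hsub ⟨x, hx, rfl⟩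
  have h2 : (volume.restrict (Set.Ioc (0:ℝ) (0 + 1))) s = 0 :=
    measure_mono_null hsub2 h1
  rw [Measure.restrict_apply' (by simpa using measurableSet_Ioc)] at h2
  rw [Set.inter_eq_self_of_subset_left (by simpa using hs)] at h2
  exact hvs h2

lemma triAux_theta_one_ne_zero :
    (volume : Measure (AddCircle (1:ℝ))) {q | triTheta q = 1} ≠ 0 := by
  refine triAux_image_ne_zero (s := Set.Ioc 0 (1/4))
    (by intro x hx; exact ⟨hx.1, by linarith [hx.2]⟩)
    (by rw [Real.volume_Ioc]; norm_num) ?_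
  rintro _ ⟨x, hx, rfl⟩
  have : ((AddCircle.equivIco 1 0 (↑x : AddCircle (1:ℝ))) : ℝ) = x := by
    rw [AddCircle.coe_equivIco_mk_apply, div_one, mul_one]
    exact Int.fract_eq_self.2 ⟨le_of_lt hx.1, by linarith [hx.2]⟩
  simp only [Set.mem_setOf_eq, triTheta, this]
  rw [if_pos (by linarith [hx.2])]

lemma triAux_theta_negone_ne_zero :
    (volume : Measure (AddCircle (1:ℝ))) {q | triTheta q = -1} ≠ 0 := by
  refine triAux_image_ne_zero (s := Set.Ioc (1/2) (3/4))
    (by intro x hx; exact ⟨by linarith [hx.1], by linarith [hx.2]⟩)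
    (by rw [Real.volume_Ioc]; norm_num) ?_
  rintro _ ⟨x, hx, rfl⟩
  have : ((AddCircle.equivIco 1 0 (↑x : AddCircle (1:ℝ))) : ℝ) = x := by
    rw [AddCircle.coe_equivIco_mk_apply, div_one, mul_one]
    exact Int.fract_eq_self.2 ⟨by linarith [hx.1], by linarith [hx.2]⟩
  simp only [Set.mem_setOf_eq, triTheta, this]
  rw [if_neg (by push_neg; linarith [hx.1])]

/-- Core circle argument: a function invariant-up-to-`c` under two translations whose
difference is an irrational rotation is a.e. constant, with `z = c * z`. -/
lemma triAux_main {μ : Measure (AddCircle (1:ℝ))} [IsProbabilityMeasure μ]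
    [μ.IsAddRightInvariant] [μ.IsAddLeftInvariant] [μ.InnerRegular]
    {g : AddCircle (1:ℝ) → ℂ} (hgm : AEStronglyMeasurable g μ) {c : ℂ}
    (hc0 : c ≠ 0) {d₁ d₂ : AddCircle (1:ℝ)} {x : ℝ} (hx : Irrational x)
    (hsum : ((x : ℝ) : AddCircle (1:ℝ)) + d₂ = d₁)
    (h1 : ∀ᵐ y ∂μ, g (y + d₁) = c * g y)
    (h2 : ∀ᵐ y ∂μ, g (y + d₂) = c * g y) :
    ∃ z : ℂ, (∀ᵐ p ∂μ, g p = z) ∧ z = c * z := by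
  set a : AddCircle (1:ℝ) := ((x : ℝ) : AddCircle (1:ℝ)) with ha
  have hq₂' : ∀ᵐ p ∂μ, g (p + a + d₂) = c * g (p + a) :=
    (measurePreserving_add_right μ a).quasiMeasurePreserving.ae h2
  have hinv : ∀ᵐ p ∂μ, g (a + p) = g p := by
    filter_upwards [h1, hq₂'] with p e1 e2
    have e3 : g (p + a + d₂) = c * g p := by rw [add_assoc, hsum, e1]
    have e4 := mul_left_cancel₀ hc0 (e3.symm.trans e2)
    rw [add_comm a p]
    exact e4.symm
  have herg : Ergodic (fun p => a + p) μ :=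
    ergodic_add_left_of_denseRange_zsmul (triAux_denseRange_zsmul hx) μ
  obtain ⟨z, hz⟩ := herg.ae_eq_const_of_ae_eq_comp_ae hgm hinv
  have hz' : ∀ᵐ p ∂μ, g p = z := hz
  refine ⟨z, hz', ?_⟩
  have hq₁z : ∀ᵐ p ∂μ, g (p + d₁) = z :=
    (measurePreserving_add_right μ d₁).quasiMeasurePreserving.ae hz'
  have hkey : ∀ᵐ p ∂μ, z = c * z := by
    filter_upwards [h1, hq₁z, hz'] with p e1 e2 e3
    exact e2.symm.trans (e1.trans (by rw [e3]))
  obtain ⟨p, hp⟩ := hkey.exists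
  exact hp

set_option maxHeartbeats 1000000 in
/-- For irrational `α`, an `L²` Koopman eigenfunction of the triangle map with
unimodular eigenvalue that depends only on the second coordinate `p` must be
a.e. constant, with eigenvalue `1`. -/
theorem triMap_eigenfunction_in_H2_constant (α β : ℝ) (hα : Irrational α)
    (f : AddCircle (1:ℝ) × AddCircle (1:ℝ) → ℂ) (c : ℂ)
    (hf : MemLp f 2 (volume : Measure (AddCircle (1:ℝ) × AddCircle (1:ℝ))))
    (hdep : ∀ q q' p : AddCircle (1:ℝ), f (q, p) = f (q', p))
    (hc : ‖c‖ = 1)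
    (heig : ∀ᵐ x ∂(volume : Measure (AddCircle (1:ℝ) × AddCircle (1:ℝ))),
      f (triMap α β x) = c * f x)
    (hne : ¬ f =ᵐ[(volume : Measure (AddCircle (1:ℝ) × AddCircle (1:ℝ)))]
      (fun _ => (0:ℂ))) :
    (∃ z : ℂ, f =ᵐ[(volume : Measure (AddCircle (1:ℝ) × AddCircle (1:ℝ)))]
      (fun _ => z)) ∧ c = 1 := by
  haveI hP : IsProbabilityMeasure (volume : Measure (AddCircle (1:ℝ))) := ⟨by simp⟩
  set μ : Measure (AddCircle (1:ℝ)) := volume with hμ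
  set g : AddCircle (1:ℝ) → ℂ := fun p => f (0, p) with hgdef
  have hfg : ∀ x : AddCircle (1:ℝ) × AddCircle (1:ℝ), f x = g x.2 := fun x => hdep x.1 0 x.2
  have hprod : (volume : Measure (AddCircle (1:ℝ) × AddCircle (1:ℝ))) = μ.prod μ := rfl
  have hc0 : c ≠ 0 := by
    intro h; rw [h] at hc; simp at hc
  -- g is a.e. strongly measurable
  have hsm := hf.aestronglyMeasurable
  obtain ⟨f', hf'sm, hae⟩ := hsm
  rw [hprod] at hae
  have h1 : ∀ᵐ q ∂μ, ∀ᵐ p ∂μ, f (q, p) = f' (q, p) := Measure.ae_ae_of_ae_prod hae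
  obtain ⟨q₀, hq₀⟩ := h1.exists
  have hgm : AEStronglyMeasurable g μ := by
    refine ⟨fun p => f' (q₀, p), hf'sm.comp_measurable measurable_prodMk_left, ?_⟩
    filter_upwards [hq₀] with p hp
    show g p = f' (q₀, p)
    rw [hgdef]
    dsimp only
    rw [hdep 0 q₀ p, hp]
  -- the eigen-equation in terms of g
  have heig' : ∀ᵐ x ∂(μ.prod μ),
      g (x.2 + ((α * triTheta x.1 + β : ℝ) : AddCircle (1:ℝ))) = c * g x.2 := by
    rw [← hprod]
    filter_upwards [heig] with x hx
    rw [hfg (triMap α β x), hfg x] at hx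
    simpa only [triMap] using hx
  have h2 := Measure.ae_ae_of_ae_prod heig'
  obtain ⟨q₁, hq₁θ, hq₁⟩ := Measure.exists_mem_of_measure_ne_zero_of_ae
    triAux_theta_one_ne_zero (ae_restrict_of_ae h2)
  obtain ⟨q₂, hq₂θ, hq₂⟩ := Measure.exists_mem_of_measure_ne_zero_of_ae
    triAux_theta_negone_ne_zero (ae_restrict_of_ae h2)
  have hq₁θ' : triTheta q₁ = 1 := hq₁θ
  have hq₂θ' : triTheta q₂ = -1 := hq₂θ
  have hq₁' : ∀ᵐ y ∂μ, g (y + ((α * 1 + β : ℝ) : AddCircle (1:ℝ))) = c * g y := by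
    filter_upwards [hq₁] with y hy
    have ht : triTheta (q₁, y).1 = 1 := hq₁θ'
    rw [ht] at hy
    exact hy
  have hq₂'' : ∀ᵐ y ∂μ, g (y + ((α * (-1) + β : ℝ) : AddCircle (1:ℝ))) = c * g y := by
    filter_upwards [hq₂] with y hy
    have ht : triTheta (q₂, y).1 = -1 := hq₂θ'
    rw [ht] at hy
    exact hy
  have h2α : Irrational (2 * α) := by
    have := hα.ratCast_mul (q := 2) (by norm_num)
    simpa using this
  have hsum : (((2 * α : ℝ)) : AddCircle (1:ℝ)) + ((α * (-1) + β : ℝ) : AddCircle (1:ℝ))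
      = ((α * 1 + β : ℝ) : AddCircle (1:ℝ)) := by
    rw [← QuotientAddGroup.mk_add]
    congr 1
    ring
  obtain ⟨z, hz', hzc⟩ := triAux_main hgm hc0 h2α hsum hq₁' hq₂''
  have hsnd : ∀ᵐ x ∂(μ.prod μ), g x.2 = z :=
    Measure.quasiMeasurePreserving_snd.ae hz'
  have hfz : f =ᵐ[(volume : Measure (AddCircle (1:ℝ) × AddCircle (1:ℝ)))] fun _ => z := by
    rw [hprod]
    filter_upwards [hsnd] with x hx
    rw [hfg x]
    exact hx
  have hz0 : z ≠ 0 := by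
    rintro rfl
    exact hne hfz
  refine ⟨⟨z, hfz⟩, ?_⟩
  have : c * z = 1 * z := by rw [← hzc, one_mul]
  exact mul_right_cancel₀ hz0 this
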